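/- arXiv:2203.13410 — 2 statements merged into one kernel-verified Lean document; each statement's English description precedes it below -/
import Mathlib

section
/- Let σ : ℝ → ℝ be given by an everywhere convergent power series σ(x) = ∑_{k=0}^∞ α_k x^k, and assume σ is not a polynomial. Then for every d ≥ 1, every compact set K ⊆ ℝ^d, every continuous function f : K → ℝ, and every ε > 0, there exists a shallow neural network g ∈ M_σ with sup_{x ∈ K} |f(x) − g(x)| ≤ ε. -/
open scoped BigOperators
open Finset

namespace ShallowAux

/-- Alternating binomial power sum (k-th finite difference of `i ↦ i^j` at 0, up to sign). -/
noncomputable def Ssum (k j : ℕ) : ℝ :=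
  ∑ i ∈ Finset.range (k+1), (-1:ℝ)^i * (k.choose i) * (i:ℝ)^j

lemma U_succ (k : ℕ) (f : ℕ → ℝ) :
    ∑ i ∈ range (k+2), (-1:ℝ)^i * ((k+1).choose i) * f i
      = (∑ i ∈ range (k+1), (-1:ℝ)^i * (k.choose i) * f i)
        - ∑ i ∈ range (k+1), (-1:ℝ)^i * (k.choose i) * f (i+1) := by
  have hL : ∑ i ∈ range (k+2), (-1:ℝ)^i * ((k+1).choose i) * f i
      = (∑ i ∈ range (k+1), (-1:ℝ)^(i+1) * (((k+1).choose (i+1) : ℕ) : ℝ) * f (i+1)) + f 0 := by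
    rw [Finset.sum_range_succ' _ (k+1)]
    simp
  have hstep : ∀ i, (((k+1).choose (i+1) : ℕ) : ℝ) = (k.choose i : ℝ) + (k.choose (i+1) : ℝ) := by
    intro i
    exact_mod_cast congrArg (Nat.cast (R := ℝ)) (Nat.choose_succ_succ k i)
  have hL2 : ∑ i ∈ range (k+2), (-1:ℝ)^i * ((k+1).choose i) * f i
      = (-(∑ i ∈ range (k+1), (-1:ℝ)^i * (k.choose i) * f (i+1))
          - ∑ i ∈ range (k+1), (-1:ℝ)^i * (k.choose (i+1)) * f (i+1)) + f 0 := by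
    rw [hL]
    congr 1
    rw [← Finset.sum_neg_distrib, ← Finset.sum_sub_distrib]
    refine Finset.sum_congr rfl fun i _ => ?_
    rw [hstep i, pow_succ]
    ring
  have hR : ∑ i ∈ range (k+1), (-1:ℝ)^i * (k.choose i) * f i
      = f 0 - ∑ i ∈ range (k+1), (-1:ℝ)^i * (k.choose (i+1)) * f (i+1) := by
    rw [Finset.sum_range_succ' _ k]
    have hext : ∑ i ∈ range (k+1), (-1:ℝ)^i * (k.choose (i+1)) * f (i+1)
        = ∑ i ∈ range k, (-1:ℝ)^i * (k.choose (i+1)) * f (i+1) := by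
      rw [Finset.sum_range_succ]
      simp [Nat.choose_succ_self]
    rw [hext]
    have : ∑ i ∈ range k, (-1:ℝ)^(i+1) * (k.choose (i+1)) * f (i+1)
        = -∑ i ∈ range k, (-1:ℝ)^i * (k.choose (i+1)) * f (i+1) := by
      rw [← Finset.sum_neg_distrib]
      refine Finset.sum_congr rfl fun i _ => ?_
      rw [pow_succ]; ring
    rw [this]
    simp
    ring
  rw [hL2, hR]
  ring

lemma Ssum_succ (k j : ℕ) :
    Ssum (k+1) j = Ssum k j - ∑ l ∈ range (j+1), (j.choose l : ℝ) * Ssum k l := by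
  have h1 := U_succ k (fun i => (i:ℝ)^j)
  have h2 : ∑ i ∈ range (k+1), (-1:ℝ)^i * (k.choose i) * (((i+1 : ℕ) : ℝ))^j
      = ∑ l ∈ range (j+1), (j.choose l : ℝ) * Ssum k l := by
    calc ∑ i ∈ range (k+1), (-1:ℝ)^i * (k.choose i) * (((i+1 : ℕ) : ℝ))^j
        = ∑ i ∈ range (k+1), ∑ l ∈ range (j+1),
            (j.choose l : ℝ) * ((-1:ℝ)^i * (k.choose i) * (i:ℝ)^l) := by
          refine Finset.sum_congr rfl fun i _ => ?_
          push_cast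
          rw [add_pow, Finset.mul_sum]
          refine Finset.sum_congr rfl fun l _ => ?_
          ring
      _ = ∑ l ∈ range (j+1), (j.choose l : ℝ) * Ssum k l := by
          rw [Finset.sum_comm]
          refine Finset.sum_congr rfl fun l _ => ?_
          rw [Ssum, Finset.mul_sum]
  rw [Ssum, Ssum]
  rw [show k+1+1 = k+2 from rfl] at *
  rw [h1, ← h2]

lemma Ssum_eq (k : ℕ) :
    (∀ j, j < k → Ssum k j = 0) ∧ Ssum k k = (-1:ℝ)^k * (k.factorial : ℝ) := by
  induction k with
  | zero =>
      constructor
      · intro j hj; exact absurd hj (Nat.not_lt_zero j)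
      · simp [Ssum]
  | succ k ih =>
      have hrec : ∀ j, Ssum (k+1) j = -∑ l ∈ range j, (j.choose l : ℝ) * Ssum k l := by
        intro j
        rw [Ssum_succ, Finset.sum_range_succ]
        simp
      constructor
      · intro j hj
        rw [hrec j]
        have : ∑ l ∈ range j, (j.choose l : ℝ) * Ssum k l = 0 := by
          refine Finset.sum_eq_zero fun l hl => ?_
          have hlk : l < k := lt_of_lt_of_le (Finset.mem_range.mp hl) (Nat.lt_succ_iff.mp hj)
          rw [ih.1 l hlk, mul_zero]
        rw [this, neg_zero]
      · rw [hrec (k+1)]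
        have : ∑ l ∈ range (k+1), ((k+1).choose l : ℝ) * Ssum k l
            = ((k+1).choose k : ℝ) * Ssum k k := by
          refine Finset.sum_eq_single_of_mem k (Finset.self_mem_range_succ k) fun l hl hlk => ?_
          have : l < k := lt_of_le_of_ne (Nat.lt_succ_iff.mp (Finset.mem_range.mp hl)) hlk
          rw [ih.1 l this, mul_zero]
        rw [this, ih.2, Nat.choose_succ_self_right]
        rw [Nat.factorial_succ]
        push_cast
        rw [pow_succ]
        ring

lemma Ssum_abs_le (k j : ℕ) : |Ssum k j| ≤ 2^k * (k:ℝ)^j := by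
  calc |Ssum k j| ≤ ∑ i ∈ range (k+1), |(-1:ℝ)^i * (k.choose i) * (i:ℝ)^j| :=
        Finset.abs_sum_le_sum_abs _ _
    _ ≤ ∑ i ∈ range (k+1), (k.choose i : ℝ) * (k:ℝ)^j := by
        refine Finset.sum_le_sum fun i hi => ?_
        have hik : (i:ℝ) ≤ (k:ℝ) := by
          exact_mod_cast Nat.lt_succ_iff.mp (Finset.mem_range.mp hi)
        rw [abs_mul, abs_mul, abs_pow, abs_neg, abs_one, one_pow, one_mul,
          abs_of_nonneg (by positivity : (0:ℝ) ≤ (k.choose i : ℝ)), abs_pow,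
          abs_of_nonneg (by positivity : (0:ℝ) ≤ (i:ℝ))]
        exact mul_le_mul_of_nonneg_left (pow_le_pow_left₀ (by positivity) hik j) (by positivity)
    _ = 2^k * (k:ℝ)^j := by
        rw [← Finset.sum_mul]
        congr 1
        exact_mod_cast congrArg (Nat.cast (R := ℝ)) (Nat.sum_range_choose k)


lemma abs_summable {σ : ℝ → ℝ} {α : ℕ → ℝ}
    (hσ : ∀ x : ℝ, HasSum (fun j : ℕ => α j * x ^ j) (σ x))
    (r : ℝ) (hr : 0 ≤ r) : Summable (fun j => |α j| * r ^ j) := by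
  have h1 : Summable (fun j => α j * r ^ j) := (hσ r).summable
  rw [← summable_abs_iff] at h1
  have : ∀ j, |α j * r ^ j| = |α j| * r ^ j := fun j => by
    rw [abs_mul, abs_of_nonneg (pow_nonneg hr j)]
  simpa [this] using h1

set_option maxHeartbeats 1000000 in
lemma ridge_pow_approx (σ : ℝ → ℝ) (α : ℕ → ℝ)
    (hσ : ∀ x : ℝ, HasSum (fun j : ℕ => α j * x ^ j) (σ x))
    (k : ℕ) (hak : α k ≠ 0) (R δ : ℝ) (hR : 0 < R) (hδ : 0 < δ) :
    ∃ h : ℝ, 0 < h ∧ ∀ s : ℝ, |s| ≤ R →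
      |(∑ i ∈ range (k+1),
          (((-1:ℝ)^(k+i) * (k.choose i)) / ((k.factorial : ℝ) * α k * h^k)) * σ ((i:ℝ)*h*s))
        - s^k| ≤ δ := by
  classical
  set C : ℝ := 2^k * ∑' j, |α j| * ((k:ℝ)*R)^j with hCdef
  have hkR : (0:ℝ) ≤ (k:ℝ)*R := by positivity
  have hsumC : Summable (fun j => |α j| * ((k:ℝ)*R)^j) := abs_summable hσ _ hkR
  have hC0 : 0 ≤ C := by
    apply mul_nonneg (by positivity)
    exact tsum_nonneg fun j => mul_nonneg (abs_nonneg _) (by positivity)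
  have hαk : 0 < |α k| := abs_pos.mpr hak
  have hD0 : (0:ℝ) < (k.factorial : ℝ) * |α k| := by
    apply mul_pos _ hαk
    exact_mod_cast Nat.factorial_pos k
  set h : ℝ := min 1 (δ * ((k.factorial : ℝ) * |α k|) / (C+1)) with hhdef
  have hh0 : 0 < h := lt_min one_pos (by positivity)
  have hh1 : h ≤ 1 := min_le_left _ _
  refine ⟨h, hh0, fun s hs => ?_⟩
  set D : ℝ := (k.factorial : ℝ) * α k * h^k with hDdef
  have hDne : D ≠ 0 := by
    apply mul_ne_zero (mul_ne_zero _ hak) (pow_ne_zero _ (ne_of_gt hh0))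
    exact_mod_cast Nat.factorial_ne_zero k
  -- the un-normalized sum
  set G : ℝ := ∑ i ∈ range (k+1), ((-1:ℝ)^(k+i) * (k.choose i)) * σ ((i:ℝ)*h*s) with hGdef
  set β : ℕ → ℝ := fun j => ((-1:ℝ)^k * Ssum k j) * (α j * (h*s)^j) with hβdef
  have hG : HasSum β G := by
    have h0 : HasSum (fun j => ∑ i ∈ range (k+1),
        ((-1:ℝ)^(k+i) * (k.choose i)) * (α j * ((i:ℝ)*h*s) ^ j)) G :=
      hasSum_sum fun i _ => (hσ _).mul_left _
    have hfun : ∀ j, ∑ i ∈ range (k+1), ((-1:ℝ)^(k+i) * (k.choose i)) * (α j * ((i:ℝ)*h*s) ^ j)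
        = β j := by
      intro j
      rw [hβdef]
      simp only [Ssum]
      rw [Finset.mul_sum, Finset.sum_mul]
      refine Finset.sum_congr rfl fun i _ => ?_
      rw [pow_add, mul_assoc (i:ℝ) h s, mul_pow]
      ring
    exact (funext hfun : _ = β) ▸ h0
  have hsummβ := hG.summable
  have hsplit := hsummβ.sum_add_tsum_nat_add (f := β) (k+1)
  have hhead : ∑ j ∈ range (k+1), β j = (k.factorial : ℝ) * α k * (h*s)^k := by
    rw [Finset.sum_eq_single_of_mem k (Finset.self_mem_range_succ k) ?side]
    · rw [hβdef]
      simp only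
      rw [(Ssum_eq k).2]
      have hsq : (-1:ℝ)^k * (-1:ℝ)^k = 1 := by
        rw [← pow_add, ← two_mul, pow_mul]; norm_num
      calc (-1:ℝ)^k * ((-1:ℝ)^k * (k.factorial:ℝ)) * (α k * (h*s)^k)
          = ((-1:ℝ)^k * (-1:ℝ)^k) * ((k.factorial:ℝ) * (α k * (h*s)^k)) := by ring
        _ = (k.factorial : ℝ) * α k * (h*s)^k := by rw [hsq]; ring
    case side =>
      intro l hl hlk
      have hlt : l < k := lt_of_le_of_ne (Nat.lt_succ_iff.mp (Finset.mem_range.mp hl)) hlk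
      rw [hβdef]
      simp only
      rw [(Ssum_eq k).1 l hlt]
      ring
  set T : ℝ := ∑' j, β (j + (k+1)) with hTdef
  have hβbound : ∀ j, |β (j + (k+1))| ≤ h^k * h * (2^k * (|α (j+(k+1))| * ((k:ℝ)*R)^(j+(k+1)))) := by
    intro j
    rw [hβdef]
    simp only
    rw [abs_mul, abs_mul, abs_mul, abs_pow, abs_neg, abs_one, one_pow, one_mul, abs_pow]
    have h1 : |Ssum k (j+(k+1))| ≤ 2^k * (k:ℝ)^(j+(k+1)) := Ssum_abs_le k _
    have h2 : |h*s| ^ (j+(k+1)) ≤ h^(k+1) * R^(j+(k+1)) := by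
      have hhs : |h*s| ≤ h * R := by
        rw [abs_mul, abs_of_nonneg hh0.le]
        exact mul_le_mul_of_nonneg_left hs hh0.le
      calc |h*s| ^ (j+(k+1)) ≤ (h*R)^(j+(k+1)) :=
            pow_le_pow_left₀ (abs_nonneg _) hhs _
        _ = h^(j+(k+1)) * R^(j+(k+1)) := by rw [mul_pow]
        _ ≤ h^(k+1) * R^(j+(k+1)) := by
            apply mul_le_mul_of_nonneg_right _ (by positivity)
            exact pow_le_pow_of_le_one hh0.le hh1 (by omega)
    calc |Ssum k (j+(k+1))| * (|α (j+(k+1))| * |h*s| ^ (j+(k+1)))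
        ≤ (2^k * (k:ℝ)^(j+(k+1))) * (|α (j+(k+1))| * (h^(k+1) * R^(j+(k+1)))) := by
          apply mul_le_mul h1 (mul_le_mul_of_nonneg_left h2 (abs_nonneg _)) (by positivity) (by positivity)
      _ = h^k * h * (2^k * (|α (j+(k+1))| * ((k:ℝ)^(j+(k+1)) * R^(j+(k+1))))) := by
          rw [pow_succ]; ring
      _ = h^k * h * (2^k * (|α (j+(k+1))| * ((k:ℝ)*R)^(j+(k+1)))) := by
          rw [mul_pow]
  have hsumtail : Summable (fun j => |α (j+(k+1))| * ((k:ℝ)*R)^(j+(k+1))) :=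
    (summable_nat_add_iff (k+1)).mpr hsumC
  have hT : |T| ≤ h^k * h * C := by
    have habs : Summable (fun j => |β (j + (k+1))|) :=
      ((summable_nat_add_iff (k+1)).mpr hsummβ).abs
    calc |T| ≤ ∑' j, |β (j + (k+1))| := by
          rw [hTdef]
          simpa [Real.norm_eq_abs] using
            norm_tsum_le_tsum_norm (f := fun j => β (j + (k+1))) (by simpa [Real.norm_eq_abs] using habs)
      _ ≤ ∑' j, h^k * h * (2^k * (|α (j+(k+1))| * ((k:ℝ)*R)^(j+(k+1)))) := by
          apply Summable.tsum_le_tsum hβbound habs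
          exact ((hsumtail.mul_left _).mul_left _)
      _ = h^k * h * (2^k * ∑' j, |α (j+(k+1))| * ((k:ℝ)*R)^(j+(k+1))) := by
          rw [tsum_mul_left, tsum_mul_left]
      _ ≤ h^k * h * C := by
          rw [hCdef]
          apply mul_le_mul_of_nonneg_left _ (by positivity)
          apply mul_le_mul_of_nonneg_left _ (by positivity)
          have h3 := hsumC.sum_add_tsum_nat_add (f := fun j => |α j| * ((k:ℝ)*R)^j) (k+1)
          have h4 : 0 ≤ ∑ j ∈ range (k+1), |α j| * ((k:ℝ)*R)^j :=
            Finset.sum_nonneg fun j _ => mul_nonneg (abs_nonneg _) (by positivity)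
          linarith
  -- now express the normalized sum
  have hnorm : ∑ i ∈ range (k+1),
      (((-1:ℝ)^(k+i) * (k.choose i)) / D) * σ ((i:ℝ)*h*s) = G / D := by
    rw [hGdef, Finset.sum_div]
    refine Finset.sum_congr rfl fun i _ => ?_
    rw [div_mul_eq_mul_div]
  have hGT : G = (k.factorial : ℝ) * α k * (h*s)^k + T := by
    rw [← hG.tsum_eq, ← hsplit, hhead, hTdef]
  have hmain : G / D - s^k = T / D := by
    rw [hGT]
    rw [add_div]
    have : ((k.factorial : ℝ) * α k * (h*s)^k) / D = s^k := by
      rw [hDdef, mul_pow]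
      field_simp
    rw [this]
    ring
  rw [hDdef] at hnorm
  rw [hnorm, ← hDdef, hmain]
  rw [abs_div]
  have hDabs : |D| = (k.factorial : ℝ) * |α k| * h^k := by
    rw [hDdef, abs_mul, abs_mul, abs_of_nonneg (by positivity : (0:ℝ) ≤ (k.factorial:ℝ)),
      abs_of_nonneg (pow_nonneg hh0.le k)]
  rw [hDabs]
  rw [div_le_iff₀ (by positivity)]
  calc |T| ≤ h^k * h * C := hT
    _ ≤ δ * ((k.factorial : ℝ) * |α k| * h^k) := by
        have hhle : h ≤ δ * ((k.factorial : ℝ) * |α k|) / (C+1) := min_le_right _ _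
        have h5 : h * C ≤ h * (C+1) := by nlinarith
        have h6 : h * (C+1) ≤ δ * ((k.factorial : ℝ) * |α k|) := by
          exact (le_div_iff₀ (by positivity)).mp hhle
        calc h^k * h * C = h^k * (h * C) := by ring
          _ ≤ h^k * (δ * ((k.factorial:ℝ) * |α k|)) := by
              apply mul_le_mul_of_nonneg_left (le_trans h5 h6) (by positivity)
          _ = δ * ((k.factorial : ℝ) * |α k| * h^k) := by ring

end ShallowAux

/-- The class `M_σ` of shallow neural networks on `ℝ^d` with activation `σ`. -/
def Shallow (σ : ℝ → ℝ) (d : ℕ) : Set ((Fin d → ℝ) → ℝ) :=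
  {f | ∃ (n : ℕ) (a : Fin n → ℝ) (w : Fin n → Fin d → ℝ) (b : Fin n → ℝ), 1 ≤ n ∧
    f = fun x => ∑ k, a k * σ ((∑ i, w k i * x i) + b k)}

namespace ShallowAux

variable {σ : ℝ → ℝ} {d : ℕ} {K : Set (Fin d → ℝ)}

/-- Functions uniformly approximable on `K` by shallow networks. -/
def NetApprox (σ : ℝ → ℝ) (d : ℕ) (K : Set (Fin d → ℝ)) : Set ((Fin d → ℝ) → ℝ) :=
  {F | ∀ δ : ℝ, 0 < δ → ∃ g ∈ Shallow σ d, ∀ x ∈ K, |F x - g x| ≤ δ}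

lemma shallow_zero : (fun _ : Fin d → ℝ => (0:ℝ)) ∈ Shallow σ d := by
  refine ⟨1, fun _ => 0, fun _ _ => 0, fun _ => 0, le_refl 1, ?_⟩
  funext x
  simp

lemma shallow_add {g₁ g₂ : (Fin d → ℝ) → ℝ} (h₁ : g₁ ∈ Shallow σ d) (h₂ : g₂ ∈ Shallow σ d) :
    (fun x => g₁ x + g₂ x) ∈ Shallow σ d := by
  obtain ⟨n₁, a₁, w₁, b₁, hn₁, hg₁⟩ := h₁
  obtain ⟨n₂, a₂, w₂, b₂, hn₂, hg₂⟩ := h₂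
  refine ⟨n₁ + n₂, Fin.append a₁ a₂, Fin.append w₁ w₂, Fin.append b₁ b₂, by omega, ?_⟩
  funext x
  simp only [hg₁, hg₂]
  rw [Fin.sum_univ_add]
  congr 1 <;> refine Finset.sum_congr rfl fun i _ => ?_ <;>
    simp [Fin.append_left, Fin.append_right]

lemma shallow_smul {g : (Fin d → ℝ) → ℝ} (c : ℝ) (h : g ∈ Shallow σ d) :
    (fun x => c * g x) ∈ Shallow σ d := by
  obtain ⟨n, a, w, b, hn, hg⟩ := h
  refine ⟨n, fun k => c * a k, w, b, hn, ?_⟩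
  funext x
  simp only [hg]
  rw [Finset.mul_sum]
  exact Finset.sum_congr rfl fun i _ => by ring

lemma netApprox_zero : (fun _ : Fin d → ℝ => (0:ℝ)) ∈ NetApprox σ d K := by
  intro δ hδ
  exact ⟨_, shallow_zero, fun x _ => by simp [hδ.le]⟩

lemma netApprox_add {F G : (Fin d → ℝ) → ℝ} (hF : F ∈ NetApprox σ d K)
    (hG : G ∈ NetApprox σ d K) : (fun x => F x + G x) ∈ NetApprox σ d K := by
  intro δ hδ
  obtain ⟨g₁, hg₁s, hg₁⟩ := hF (δ/2) (by positivity)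
  obtain ⟨g₂, hg₂s, hg₂⟩ := hG (δ/2) (by positivity)
  refine ⟨fun x => g₁ x + g₂ x, shallow_add hg₁s hg₂s, fun x hx => ?_⟩
  have h1 := hg₁ x hx
  have h2 := hg₂ x hx
  have h3 : F x + G x - (g₁ x + g₂ x) = (F x - g₁ x) + (G x - g₂ x) := by ring
  calc |F x + G x - (g₁ x + g₂ x)| = |(F x - g₁ x) + (G x - g₂ x)| := by rw [h3]
    _ ≤ |F x - g₁ x| + |G x - g₂ x| := abs_add_le _ _
    _ ≤ δ := by linarith

lemma netApprox_smul (c : ℝ) {F : (Fin d → ℝ) → ℝ} (hF : F ∈ NetApprox σ d K) :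
    (fun x => c * F x) ∈ NetApprox σ d K := by
  intro δ hδ
  obtain ⟨g, hgs, hg⟩ := hF (δ/(|c|+1)) (by positivity)
  refine ⟨fun x => c * g x, shallow_smul c hgs, fun x hx => ?_⟩
  have h1 : |c * F x - c * g x| = |c| * |F x - g x| := by
    rw [← abs_mul]
    congr 1
    ring
  rw [h1]
  have h2 : |c| * |F x - g x| ≤ |c| * (δ/(|c|+1)) :=
    mul_le_mul_of_nonneg_left (hg x hx) (abs_nonneg c)
  have h3 : |c| * (δ/(|c|+1)) ≤ δ := by
    rw [mul_div_assoc', div_le_iff₀ (by positivity)]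
    nlinarith [abs_nonneg c]
  linarith

lemma netApprox_sum {ι : Type*} (t : Finset ι) (F : ι → (Fin d → ℝ) → ℝ)
    (h : ∀ i ∈ t, F i ∈ NetApprox σ d K) :
    (fun x => ∑ i ∈ t, F i x) ∈ NetApprox σ d K := by
  classical
  induction t using Finset.cons_induction with
  | empty => simpa using (netApprox_zero (σ := σ) (d := d) (K := K))
  | cons i t hit ih =>
    simp only [Finset.sum_cons]
    exact netApprox_add (h i (Finset.mem_cons_self i t))
      (ih fun j hj => h j (Finset.mem_cons.mpr (Or.inr hj)))

lemma netApprox_of_close {G : (Fin d → ℝ) → ℝ}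
    (h : ∀ δ : ℝ, 0 < δ → ∃ F ∈ NetApprox σ d K, ∀ x ∈ K, |G x - F x| ≤ δ) :
    G ∈ NetApprox σ d K := by
  intro δ hδ
  obtain ⟨F, hF, hGF⟩ := h (δ/2) (by positivity)
  obtain ⟨g, hgs, hFg⟩ := hF (δ/2) (by positivity)
  refine ⟨g, hgs, fun x hx => ?_⟩
  have h1 := hGF x hx
  have h2 := hFg x hx
  calc |G x - g x| ≤ |G x - F x| + |F x - g x| := abs_sub_le _ _ _
    _ ≤ δ := by linarith

lemma netApprox_congr {F G : (Fin d → ℝ) → ℝ} (h : ∀ x ∈ K, F x = G x)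
    (hF : F ∈ NetApprox σ d K) : G ∈ NetApprox σ d K := by
  intro δ hδ
  obtain ⟨g, hgs, hg⟩ := hF δ hδ
  exact ⟨g, hgs, fun x hx => by rw [← h x hx]; exact hg x hx⟩

lemma ridge_bound (hK : IsCompact K) (hne : K.Nonempty) (w : Fin d → ℝ) (c : ℝ) :
    ∃ R : ℝ, 0 < R ∧ ∀ x ∈ K, |(∑ i, w i * x i) + c| ≤ R := by
  have hcont : ContinuousOn (fun x : Fin d → ℝ => |(∑ i, w i * x i) + c|) K := by
    apply Continuous.continuousOn
    apply Continuous.abs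
    exact (continuous_finset_sum _ fun i _ =>
      (continuous_const.mul (continuous_apply i))).add continuous_const
  obtain ⟨x₀, hx₀K, hx₀⟩ := hK.exists_isMaxOn hne hcont
  refine ⟨|(∑ i, w i * x₀ i) + c| + 1, by positivity, fun x hx => ?_⟩
  have := hx₀ hx
  simp only [Set.mem_setOf_eq] at this
  linarith

lemma mem_ridge_pow {α : ℕ → ℝ} (hσ : ∀ x : ℝ, HasSum (fun j : ℕ => α j * x ^ j) (σ x))
    (hK : IsCompact K) (hne : K.Nonempty) {k : ℕ} (hak : α k ≠ 0) (w : Fin d → ℝ) (c : ℝ) :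
    (fun x : Fin d → ℝ => ((∑ i, w i * x i) + c)^k) ∈ NetApprox σ d K := by
  obtain ⟨R, hR, hRb⟩ := ridge_bound hK hne w c
  intro δ hδ
  obtain ⟨h, hh0, happ⟩ := ridge_pow_approx σ α hσ k hak R δ hR hδ
  refine ⟨fun x => ∑ i ∈ Finset.range (k+1),
      (((-1:ℝ)^(k+i) * (k.choose i)) / ((k.factorial:ℝ) * α k * h^k))
        * σ ((i:ℝ)*h*((∑ j, w j * x j) + c)), ?_, ?_⟩
  · refine ⟨k+1,
      fun i => ((-1:ℝ)^(k+(i:ℕ)) * (k.choose (i:ℕ))) / ((k.factorial:ℝ) * α k * h^k),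
      fun i => fun j => (i:ℕ)*h*(w j), fun i => (i:ℕ)*h*c, by omega, ?_⟩
    funext x
    rw [Fin.sum_univ_eq_sum_range (fun i =>
      (((-1:ℝ)^(k+i) * (k.choose i)) / ((k.factorial:ℝ) * α k * h^k))
        * σ ((∑ j, (i:ℝ)*h*(w j) * x j) + (i:ℝ)*h*c)) (k+1)]
    refine Finset.sum_congr rfl fun i _ => ?_
    congr 2
    rw [mul_add, Finset.mul_sum]
    congr 1
    exact Finset.sum_congr rfl fun j _ => by ring
  · intro x hx
    rw [abs_sub_comm]
    exact happ _ (hRb x hx)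

lemma mem_pow {α : ℕ → ℝ} (hσ : ∀ x : ℝ, HasSum (fun j : ℕ => α j * x ^ j) (σ x))
    (hinf : ∀ m : ℕ, ∃ k, m ≤ k ∧ α k ≠ 0)
    (hK : IsCompact K) (hne : K.Nonempty) (w : Fin d → ℝ) :
    ∀ m : ℕ, (fun x : Fin d → ℝ => (∑ i, w i * x i)^m) ∈ NetApprox σ d K := by
  intro m
  induction m using Nat.strong_induction_on with
  | _ m ih =>
  obtain ⟨k, hmk, hak⟩ := hinf m
  set j := k - m with hjdef
  set γ : ℕ → ℝ := fun m' => (k.choose m' : ℝ) * Ssum j (k - m') with hγdef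
  have hγm : γ m = (k.choose m : ℝ) * ((-1:ℝ)^j * (j.factorial : ℝ)) := by
    rw [hγdef]
    simp only
    rw [← hjdef, (Ssum_eq j).2]
  have hγm0 : γ m ≠ 0 := by
    rw [hγm]
    apply mul_ne_zero
    · exact Nat.cast_ne_zero.mpr (Nat.choose_pos hmk).ne'
    · apply mul_ne_zero (pow_ne_zero _ (by norm_num))
      exact_mod_cast Nat.factorial_ne_zero j
  set s : (Fin d → ℝ) → ℝ := fun x => ∑ i, w i * x i with hsdef
  have hQ : (fun x => ∑ c ∈ Finset.range (j+1),
      (-1:ℝ)^c * (j.choose c) * (s x + (c:ℝ))^k) ∈ NetApprox σ d K := by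
    apply netApprox_sum
    intro c _
    exact netApprox_smul _ (mem_ridge_pow hσ hK hne hak w (c:ℝ))
  have hQid : ∀ t : ℝ, ∑ c ∈ Finset.range (j+1), (-1:ℝ)^c * (j.choose c) * (t + (c:ℝ))^k
      = ∑ m' ∈ Finset.range (k+1), γ m' * t^m' := by
    intro t
    calc ∑ c ∈ Finset.range (j+1), (-1:ℝ)^c * (j.choose c) * (t + (c:ℝ))^k
        = ∑ c ∈ Finset.range (j+1), ∑ m' ∈ Finset.range (k+1),
            (k.choose m' : ℝ) * t^m' * ((-1:ℝ)^c * (j.choose c) * (c:ℝ)^(k-m')) := by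
          refine Finset.sum_congr rfl fun c _ => ?_
          rw [add_pow, Finset.mul_sum]
          refine Finset.sum_congr rfl fun m' _ => by ring
      _ = ∑ m' ∈ Finset.range (k+1), γ m' * t^m' := by
          rw [Finset.sum_comm]
          refine Finset.sum_congr rfl fun m' _ => ?_
          rw [hγdef]
          simp only
          rw [Ssum, Finset.mul_sum, Finset.sum_mul]
          refine Finset.sum_congr rfl fun i _ => by ring
  -- the remainder part
  have hrest : (fun x => ∑ m' ∈ (Finset.range (k+1)).erase m,
      (-(γ m' / γ m)) * (s x)^m') ∈ NetApprox σ d K := by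
    apply netApprox_sum
    intro m' hm'
    obtain ⟨hne', hmem⟩ := Finset.mem_erase.mp hm'
    rcases lt_or_gt_of_ne hne' with hlt | hgt
    · exact netApprox_smul (-(γ m' / γ m)) (ih m' hlt)
    · -- m' > m : γ m' = 0
      have hm'k : m' ≤ k := Nat.lt_succ_iff.mp (Finset.mem_range.mp hmem)
      have hz : γ m' = 0 := by
        rw [hγdef]
        simp only
        rw [(Ssum_eq j).1 (k - m') (by omega), mul_zero]
      have : (fun x : Fin d → ℝ => (-(γ m' / γ m)) * (s x)^m') = fun _ => (0:ℝ) := by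
        funext x
        rw [hz]
        simp
      rw [this]
      exact netApprox_zero
  have hcomb : (fun x => (1/γ m) * (∑ c ∈ Finset.range (j+1),
      (-1:ℝ)^c * (j.choose c) * (s x + (c:ℝ))^k)
      + ∑ m' ∈ (Finset.range (k+1)).erase m, (-(γ m' / γ m)) * (s x)^m')
      ∈ NetApprox σ d K := netApprox_add (netApprox_smul _ hQ) hrest
  refine netApprox_congr (F := _) (fun x _ => ?_) hcomb
  rw [hQid (s x)]
  have hsplit : ∑ m' ∈ Finset.range (k+1), γ m' * (s x)^m'
      = γ m * (s x)^m + ∑ m' ∈ (Finset.range (k+1)).erase m, γ m' * (s x)^m' := by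
    rw [← Finset.add_sum_erase (Finset.range (k+1)) (fun m' => γ m' * (s x)^m')
      (a := m) (Finset.mem_range.mpr (by omega))]
  rw [hsplit]
  have hE : ∑ m' ∈ (Finset.range (k+1)).erase m, (-(γ m' / γ m)) * (s x)^m'
      = -(∑ m' ∈ (Finset.range (k+1)).erase m, γ m' * (s x)^m') / γ m := by
    rw [neg_div, Finset.sum_div, ← Finset.sum_neg_distrib]
    refine Finset.sum_congr rfl fun m' _ => by ring
  rw [hE]
  field_simp
  simp only [hsdef]
  ring


lemma mem_exp {α : ℕ → ℝ} (hσ : ∀ x : ℝ, HasSum (fun j : ℕ => α j * x ^ j) (σ x))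
    (hinf : ∀ m : ℕ, ∃ k, m ≤ k ∧ α k ≠ 0)
    (hK : IsCompact K) (hne : K.Nonempty) (w : Fin d → ℝ) :
    (fun x : Fin d → ℝ => Real.exp (∑ i, w i * x i)) ∈ NetApprox σ d K := by
  apply netApprox_of_close
  intro δ hδ
  obtain ⟨R, hR, hRb⟩ := ridge_bound hK hne w 0
  simp only [add_zero] at hRb
  have hsum : Summable (fun j : ℕ => R^j / (j.factorial : ℝ)) :=
    Real.summable_pow_div_factorial R
  obtain ⟨n, hn⟩ : ∃ n : ℕ, ∑' j : ℕ, R^(j+n) / ((j+n).factorial : ℝ) < δ := by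
    have htend := tendsto_sum_nat_add (f := fun j : ℕ => R^j / (j.factorial : ℝ))
    exact (htend.eventually (gt_mem_nhds hδ)).exists
  refine ⟨fun x => ∑ j ∈ Finset.range n, (1/(j.factorial : ℝ)) * (∑ i, w i * x i)^j, ?_, ?_⟩
  · apply netApprox_sum
    intro jj _
    exact netApprox_smul _ (mem_pow hσ hinf hK hne w jj)
  · intro x hx
    set t : ℝ := ∑ i, w i * x i with htdef
    have hexp : Real.exp t = ∑' j : ℕ, t^j / (j.factorial : ℝ) := by
      rw [Real.exp_eq_exp_ℝ, NormedSpace.exp_eq_tsum_div]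
    have hsum_t : Summable (fun j : ℕ => t^j / (j.factorial : ℝ)) :=
      Real.summable_pow_div_factorial t
    have hsplit := hsum_t.sum_add_tsum_nat_add (f := fun j : ℕ => t^j / (j.factorial : ℝ)) n
    have heq : Real.exp t - ∑ j ∈ Finset.range n, (1/(j.factorial : ℝ)) * t^j
        = ∑' j : ℕ, t^(j+n) / ((j+n).factorial : ℝ) := by
      have hpart : ∑ j ∈ Finset.range n, (1/(j.factorial : ℝ)) * t^j
          = ∑ j ∈ Finset.range n, t^j / (j.factorial : ℝ) :=
        Finset.sum_congr rfl fun j _ => by ring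
      rw [hexp, hpart, ← hsplit]
      ring
    rw [heq]
    have habs : Summable (fun j : ℕ => |t^(j+n) / ((j+n).factorial : ℝ)|) :=
      ((summable_nat_add_iff n).mpr hsum_t).abs
    have htail : Summable (fun j : ℕ => R^(j+n) / ((j+n).factorial : ℝ)) :=
      (summable_nat_add_iff n).mpr hsum
    calc |∑' j : ℕ, t^(j+n) / ((j+n).factorial : ℝ)|
        ≤ ∑' j : ℕ, |t^(j+n) / ((j+n).factorial : ℝ)| := by
          have hs' : Summable fun j : ℕ => ‖t^(j+n) / ((j+n).factorial : ℝ)‖ := by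
            simpa only [Real.norm_eq_abs] using habs
          simpa only [Real.norm_eq_abs] using
            norm_tsum_le_tsum_norm (f := fun j : ℕ => t^(j+n) / ((j+n).factorial : ℝ)) hs'
      _ ≤ ∑' j : ℕ, R^(j+n) / ((j+n).factorial : ℝ) := by
          apply Summable.tsum_le_tsum _ habs htail
          intro j
          rw [abs_div, abs_pow, abs_of_nonneg (by positivity : (0:ℝ) ≤ ((j+n).factorial : ℝ))]
          apply div_le_div_of_nonneg_right ?_ (by positivity)
          · exact pow_le_pow_left₀ (abs_nonneg _) (hRb x hx) _
      _ ≤ δ := hn.le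

lemma exists_ne {α : ℕ → ℝ} (hσ : ∀ x : ℝ, HasSum (fun j : ℕ => α j * x ^ j) (σ x))
    (hnp : ¬∃ p : Polynomial ℝ, ∀ x : ℝ, σ x = p.eval x) :
    ∀ m : ℕ, ∃ k, m ≤ k ∧ α k ≠ 0 := by
  intro m
  by_contra hcon
  push_neg at hcon
  apply hnp
  refine ⟨∑ k ∈ Finset.range m, Polynomial.C (α k) * Polynomial.X ^ k, fun x => ?_⟩
  have h1 : HasSum (fun k : ℕ => α k * x^k) (∑ k ∈ Finset.range m, α k * x^k) := by
    apply hasSum_sum_of_ne_finset_zero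
    intro k hk
    have hmk : m ≤ k := by simpa [Finset.mem_range, not_lt] using hk
    rw [hcon k hmk, zero_mul]
  rw [(hσ x).unique h1]
  simp [Polynomial.eval_finset_sum]

end ShallowAux

/-- Universal approximation for shallow real networks with a non-polynomial activation given by
an everywhere convergent power series: every continuous function on a compact set `K ⊆ ℝ^d` can
be approximated uniformly on `K` to accuracy `ε` by some `g ∈ M_σ`. -/
theorem shallow_universal_approximation (σ : ℝ → ℝ) (α : ℕ → ℝ)
    (hσ : ∀ x : ℝ, HasSum (fun k : ℕ => α k * x ^ k) (σ x))
    (hnp : ¬∃ p : Polynomial ℝ, ∀ x : ℝ, σ x = p.eval x)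
    (d : ℕ) (hd : 1 ≤ d) (K : Set (Fin d → ℝ)) (hK : IsCompact K)
    (f : (Fin d → ℝ) → ℝ) (hf : ContinuousOn f K) (ε : ℝ) (hε : 0 < ε) :
    ∃ g ∈ Shallow σ d, ∀ x ∈ K, |f x - g x| ≤ ε := by
  classical
  rcases K.eq_empty_or_nonempty with hKe | hne
  · refine ⟨fun _ => 0, ShallowAux.shallow_zero, fun x hx => ?_⟩
    rw [hKe] at hx
    exact absurd hx (Set.notMem_empty x)
  haveI : CompactSpace K := isCompact_iff_compactSpace.mp hK
  have hinf := ShallowAux.exists_ne hσ hnp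
  set ridge : (Fin d → ℝ) → C(K, ℝ) := fun w =>
    ⟨fun x => Real.exp (∑ i, w i * (x : Fin d → ℝ) i),
      Real.continuous_exp.comp (continuous_finset_sum _ fun i _ =>
        (continuous_const.mul ((continuous_apply i).comp continuous_subtype_val)))⟩
    with hridge
  have hval : ∀ (w : Fin d → ℝ) (z : K), ridge w z = Real.exp (∑ i, w i * (z : Fin d → ℝ) i) :=
    fun w z => rfl
  set EM : Submonoid C(K, ℝ) :=
    { carrier := Set.range ridge
      one_mem' := ⟨0, by
        ext z
        rw [hval]
        simp⟩
      mul_mem' := by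
        rintro _ _ ⟨w₁, rfl⟩ ⟨w₂, rfl⟩
        refine ⟨w₁ + w₂, ?_⟩
        ext z
        rw [ContinuousMap.mul_apply, hval, hval, hval, ← Real.exp_add]
        congr 1
        rw [← Finset.sum_add_distrib]
        exact Finset.sum_congr rfl fun i _ => by simp [add_mul] }
    with hEM
  set A : Subalgebra ℝ C(K, ℝ) := Algebra.adjoin ℝ (Set.range ridge) with hA
  have hsep : A.SeparatesPoints := by
    rintro x y hxy
    have hxy' : (x : Fin d → ℝ) ≠ y := fun hc => hxy (Subtype.ext hc)
    obtain ⟨i, hi⟩ := Function.ne_iff.mp hxy'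
    refine ⟨ridge (Pi.single i 1), ⟨ridge (Pi.single i 1), Algebra.subset_adjoin ⟨_, rfl⟩, rfl⟩, ?_⟩
    have hsingle : ∀ z : K, ridge (Pi.single i 1) z = Real.exp ((z : Fin d → ℝ) i) := by
      intro z
      rw [hval]
      congr 1
      rw [Finset.sum_eq_single i (fun j _ hj => by simp [Pi.single_eq_of_ne hj])
        (fun h => absurd (Finset.mem_univ i) h)]
      simp
    rw [hsingle, hsingle]
    exact fun hc => hi (Real.exp_injective hc)
  obtain ⟨⟨g, hgA⟩, hg⟩ :=
    ContinuousMap.exists_mem_subalgebra_near_continuous_of_separatesPoints A hsep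
      (fun x : K => f x) hf.restrict (ε/2) (by positivity)
  have hspan : g ∈ Submodule.span ℝ (Set.range ridge) := by
    have h1 := Algebra.adjoin_eq_span (R := ℝ) (Set.range ridge)
    have h2 : Submonoid.closure (Set.range ridge) = EM := Submonoid.closure_eq EM
    have h3 : g ∈ Subalgebra.toSubmodule A := hgA
    rw [hA, h1, h2] at h3
    exact h3
  have key : ∀ gc : C(K, ℝ), gc ∈ Submodule.span ℝ (Set.range ridge) →
      ∃ G ∈ ShallowAux.NetApprox σ d K, ∀ z : K, G (z : Fin d → ℝ) = gc z := by
    intro gc hgc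
    induction hgc using Submodule.span_induction with
    | mem gc' hgc' =>
        obtain ⟨w, rfl⟩ := hgc'
        exact ⟨fun x => Real.exp (∑ i, w i * x i),
          ShallowAux.mem_exp hσ hinf hK hne w, fun z => rfl⟩
    | zero => exact ⟨fun _ => 0, ShallowAux.netApprox_zero, fun z => rfl⟩
    | add f₁ f₂ h₁ h₂ ih₁ ih₂ =>
        obtain ⟨G₁, hG₁, he₁⟩ := ih₁
        obtain ⟨G₂, hG₂, he₂⟩ := ih₂
        exact ⟨fun x => G₁ x + G₂ x, ShallowAux.netApprox_add hG₁ hG₂, fun z => by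
          show G₁ z + G₂ z = (f₁ + f₂) z
          rw [ContinuousMap.add_apply, he₁ z, he₂ z]⟩
    | smul c f₁ h₁ ih₁ =>
        obtain ⟨G₁, hG₁, he₁⟩ := ih₁
        exact ⟨fun x => c * G₁ x, ShallowAux.netApprox_smul c hG₁, fun z => by
          show c * G₁ z = (c • f₁) z
          rw [ContinuousMap.smul_apply, he₁ z, smul_eq_mul]⟩
  obtain ⟨G, hGapp, hGeq⟩ := key g hspan
  obtain ⟨gnet, hgnet, hclose⟩ := hGapp (ε/2) (by positivity)
  refine ⟨gnet, hgnet, fun x hx => ?_⟩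
  have h1 := hg ⟨x, hx⟩
  rw [Real.norm_eq_abs] at h1
  have h2 := hclose x hx
  have h3 : G x = g ⟨x, hx⟩ := hGeq ⟨x, hx⟩
  have h4 : |f x - G x| ≤ ε/2 := by
    rw [h3, abs_sub_comm]
    exact h1.le
  calc |f x - gnet x| ≤ |f x - G x| + |G x - gnet x| := abs_sub_le _ _ _
    _ ≤ ε/2 + ε/2 := add_le_add h4 h2
    _ = ε := by ring
end

section
/- Let σ = ReLU, i.e. σ(x) = max{x, 0} on ℝ, and let d ≥ 1. Then for every compact set K ⊆ ℝ^d, every continuous function f : K → ℝ, and every ε > 0, there exist a depth L and a residual network g ∈ R_{L,σ}(d+2, 2, 2, …, 2) (input-state width d+2 and all residual block widths equal to 2) such that sup_{x ∈ K} |f(x) − g(x)| ≤ ε. -/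
open scoped BigOperators
open Matrix

/-- Residual blocks of a ResNet over `ℝ` with internal width `d0` and block widths `Ds`. -/
def ResBlocks (σ : ℝ → ℝ) (d0 : ℕ) : List ℕ → Set ((Fin d0 → ℝ) → (Fin d0 → ℝ))
  | [] => {f | f = id}
  | D :: Ds =>
    {f | ∃ (A : Matrix (Fin d0) (Fin D) ℝ) (W : Matrix (Fin D) (Fin d0) ℝ) (b : Fin D → ℝ),
         ∃ g ∈ ResBlocks σ d0 Ds,
         f = fun z => g (z + A.mulVec fun i => σ (W.mulVec z i + b i))}

/-- The class `R_{L,σ}(d0, D_1, …, D_{L-1})` of functions `ℝ^d → ℝ` computed by residual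
networks, where `Ds = [D_1, …, D_{L-1}]`. -/
def ResNet (σ : ℝ → ℝ) (d d0 : ℕ) (Ds : List ℕ) : Set ((Fin d → ℝ) → ℝ) :=
  {f | ∃ (A0 : Matrix (Fin d0) (Fin d) ℝ) (b0 : Fin d0 → ℝ) (AL : Fin d0 → ℝ),
       ∃ h ∈ ResBlocks σ d0 Ds,
       f = fun z => ∑ i, AL i * h (A0.mulVec z + b0) i}

namespace ResNetUA

/-! ### Max-min combinations of affine functions -/

variable {d : ℕ}

/-- An affine function `x ↦ w ⬝ x + c`, given by `(w, c)`. -/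
abbrev Aff (d : ℕ) := (Fin d → ℝ) × ℝ

def evalA (a : Aff d) (x : Fin d → ℝ) : ℝ := a.1 ⬝ᵥ x + a.2

/-- A nonempty "min group". -/
abbrev Grp (d : ℕ) := Aff d × List (Aff d)

def minList (g : Grp d) (x : Fin d → ℝ) : ℝ :=
  g.2.foldl (fun m a => min m (evalA a x)) (evalA g.1 x)

def maxList (first : Grp d) (rest : List (Grp d)) (x : Fin d → ℝ) : ℝ :=
  rest.foldl (fun M gp => max M (minList gp x)) (minList first x)

def Rep (φ : (Fin d → ℝ) → ℝ) : Prop :=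
  ∃ first rest, φ = maxList first rest

lemma foldl_max {α : Type*} (l : List α) (f : α → ℝ) (A b : ℝ) :
    l.foldl (fun M a => max M (f a)) (max A b) = max A (l.foldl (fun M a => max M (f a)) b) := by
  induction l generalizing b with
  | nil => rfl
  | cons c l ih => simp only [List.foldl_cons, max_assoc, ih]

lemma foldl_min {α : Type*} (l : List α) (f : α → ℝ) (A b : ℝ) :
    l.foldl (fun M a => min M (f a)) (min A b) = min A (l.foldl (fun M a => min M (f a)) b) := by
  induction l generalizing b with
  | nil => rfl
  | cons c l ih => simp only [List.foldl_cons, min_assoc, ih]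

lemma maxList_cons (f g : Grp d) (r : List (Grp d)) (x : Fin d → ℝ) :
    maxList f (g :: r) x = max (minList f x) (maxList g r x) := by
  simp only [maxList, List.foldl_cons]
  exact foldl_max r _ _ _

lemma maxList_nil (f : Grp d) (x : Fin d → ℝ) : maxList f [] x = minList f x := rfl

/-- Merge two min-groups: the min of the two minLists. -/
def merge (g h : Grp d) : Grp d := (g.1, g.2 ++ h.1 :: h.2)

lemma minList_merge (g h : Grp d) (x : Fin d → ℝ) :
    minList (merge g h) x = min (minList g x) (minList h x) := by
  simp only [merge, minList, List.foldl_append, List.foldl_cons]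
  exact foldl_min h.2 _ _ _

lemma rep_sup {φ ψ : (Fin d → ℝ) → ℝ} (hφ : Rep φ) (hψ : Rep ψ) :
    Rep (fun x => max (φ x) (ψ x)) := by
  obtain ⟨f1, r1, rfl⟩ := hφ
  obtain ⟨f2, r2, rfl⟩ := hψ
  refine ⟨f1, r1 ++ f2 :: r2, ?_⟩
  funext x
  simp only [maxList, List.foldl_append, List.foldl_cons]
  exact (foldl_max r2 _ _ _).symm

lemma rep_min_minList (g f2 : Grp d) (r2 : List (Grp d)) :
    Rep (fun x => min (minList g x) (maxList f2 r2 x)) := by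
  induction r2 generalizing f2 with
  | nil =>
    refine ⟨merge g f2, [], ?_⟩
    funext x
    rw [maxList_nil, maxList_nil, minList_merge]
  | cons h r2 ih =>
    have : (fun x => min (minList g x) (maxList f2 (h :: r2) x))
        = fun x => max (min (minList g x) (minList f2 x))
            (min (minList g x) (maxList h r2 x)) := by
      funext x; rw [maxList_cons, min_max_distrib_left]
    rw [this]
    exact rep_sup ⟨merge g f2, [], funext fun x => by
      rw [maxList_nil, minList_merge]⟩ (ih h)

lemma rep_inf {φ ψ : (Fin d → ℝ) → ℝ} (hφ : Rep φ) (hψ : Rep ψ) :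
    Rep (fun x => min (φ x) (ψ x)) := by
  obtain ⟨f1, r1, rfl⟩ := hφ
  obtain ⟨f2, r2, rfl⟩ := hψ
  induction r1 generalizing f1 with
  | nil => exact rep_min_minList f1 f2 r2
  | cons g r1 ih =>
    have : (fun x => min (maxList f1 (g :: r1) x) (maxList f2 r2 x))
        = fun x => max (min (minList f1 x) (maxList f2 r2 x))
            (min (maxList g r1 x) (maxList f2 r2 x)) := by
      funext x; rw [maxList_cons, min_max_distrib_right]
    rw [this]
    exact rep_sup (rep_min_minList f1 f2 r2) (ih g)

lemma continuous_evalA (a : Aff d) : Continuous (evalA a) := by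
  have : Continuous fun x : Fin d → ℝ => a.1 ⬝ᵥ x := by
    unfold dotProduct
    exact continuous_finset_sum _ fun i _ => continuous_const.mul (continuous_apply i)
  exact this.add continuous_const

lemma continuous_foldl_min (l : List (Aff d)) (F : (Fin d → ℝ) → ℝ) (hF : Continuous F) :
    Continuous (fun x => l.foldl (fun m a => min m (evalA a x)) (F x)) := by
  induction l generalizing F with
  | nil => exact hF
  | cons a l ih => exact ih _ (hF.min (continuous_evalA a))

lemma continuous_minList (g : Grp d) : Continuous (minList g) :=
  continuous_foldl_min g.2 _ (continuous_evalA g.1)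

lemma continuous_maxList (f : Grp d) (r : List (Grp d)) : Continuous (maxList f r) := by
  induction r generalizing f with
  | nil => exact continuous_minList f
  | cons g r ih =>
    have : maxList f (g :: r) = fun x => max (minList f x) (maxList g r x) :=
      funext fun x => maxList_cons f g r x
    rw [this]
    exact (continuous_minList f).max (ih g)

lemma rep_continuous {φ : (Fin d → ℝ) → ℝ} (h : Rep φ) : Continuous φ := by
  obtain ⟨f, r, rfl⟩ := h; exact continuous_maxList f r

lemma rep_const (c : ℝ) : Rep (fun _ : Fin d → ℝ => c) := by
  refine ⟨((0, c), ([] : List (Aff d))), [], ?_⟩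
  funext x
  simp [maxList_nil, minList, evalA]

lemma rep_affine (w : Fin d → ℝ) (c : ℝ) : Rep (fun x => w ⬝ᵥ x + c) :=
  ⟨((w, c), ([] : List (Aff d))), [], rfl⟩

/-! ### Residual-network implementation -/

def rl : ℝ → ℝ := fun x => max x 0

variable {d0 : ℕ}

def stepAssign (r : Fin d0) (v : Fin d0 → ℝ) (c : ℝ) : (Fin d0 → ℝ) → (Fin d0 → ℝ) :=
  fun z => Function.update z r (v ⬝ᵥ z + c)

def stepMin (r : Fin d0) (v : Fin d0 → ℝ) (c : ℝ) : (Fin d0 → ℝ) → (Fin d0 → ℝ) :=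
  fun z => Function.update z r (min (z r) (v ⬝ᵥ z + c))

def stepMax (r : Fin d0) (v : Fin d0 → ℝ) (c : ℝ) : (Fin d0 → ℝ) → (Fin d0 → ℝ) :=
  fun z => Function.update z r (max (z r) (v ⬝ᵥ z + c))

def esel (r : Fin d0) : Fin d0 → ℝ := fun j => if j = r then (1:ℝ) else 0

lemma sel_dot (r : Fin d0) (z : Fin d0 → ℝ) : esel r ⬝ᵥ z = z r := by
  simp [esel, dotProduct, ite_mul, Finset.sum_ite_eq']

lemma dot_sub (u w z : Fin d0 → ℝ) :
    (fun j => u j - w j) ⬝ᵥ z = u ⬝ᵥ z - w ⬝ᵥ z := by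
  simp [dotProduct, sub_mul, Finset.sum_sub_distrib]

def W2 (p q : Fin d0 → ℝ) : Matrix (Fin 2) (Fin d0) ℝ := ![p, q]

def A2 (r : Fin d0) (s t : ℝ) : Matrix (Fin d0) (Fin 2) ℝ :=
  fun j => if j = r then ![s, t] else 0

lemma W2_mulVec_zero (p q z : Fin d0 → ℝ) : (W2 p q).mulVec z 0 = p ⬝ᵥ z := by
  simp [W2, mulVec]

lemma W2_mulVec_one (p q z : Fin d0 → ℝ) : (W2 p q).mulVec z 1 = q ⬝ᵥ z := by
  simp [W2, mulVec]

lemma A2_mulVec (r : Fin d0) (s t : ℝ) (u : Fin 2 → ℝ) :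
    (A2 r s t).mulVec u = fun j => if j = r then s * u 0 + t * u 1 else 0 := by
  funext j
  by_cases h : j = r <;>
    simp [A2, mulVec, dotProduct, Fin.sum_univ_two, h]

lemma rl_sub_rl_neg (t : ℝ) : rl t - rl (-t) = t :=
  max_zero_sub_max_neg_zero_eq_self t

lemma stepAssign_mem (r : Fin d0) (v : Fin d0 → ℝ) (c : ℝ) :
    stepAssign r v c ∈ ResBlocks rl d0 [2] := by
  refine ⟨A2 r 1 (-1), W2 (fun j => v j - esel r j) (fun j => esel r j - v j),
    ![c, -c], id, rfl, ?_⟩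
  funext z
  funext j
  show Function.update z r (v ⬝ᵥ z + c) j = z j + (A2 r 1 (-1)).mulVec _ j
  rw [A2_mulVec]
  beta_reduce
  by_cases hj : j = r
  · subst hj
    rw [Function.update_self, if_pos rfl, W2_mulVec_zero, W2_mulVec_one, dot_sub, dot_sub, sel_dot]
    have key := rl_sub_rl_neg (v ⬝ᵥ z - z j + c)
    simp only [Matrix.cons_val_zero, Matrix.cons_val_one, Matrix.head_cons]
    rw [show z j - v ⬝ᵥ z + -c = -(v ⬝ᵥ z - z j + c) by ring]
    linarith
  · rw [Function.update_of_ne hj, if_neg hj, add_zero]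

lemma stepMin_mem (r : Fin d0) (v : Fin d0 → ℝ) (c : ℝ) :
    stepMin r v c ∈ ResBlocks rl d0 [2] := by
  refine ⟨A2 r (-1) 0, W2 (fun j => esel r j - v j) 0, ![-c, 0], id, rfl, ?_⟩
  funext z
  funext j
  show Function.update z r (min (z r) (v ⬝ᵥ z + c)) j = z j + (A2 r (-1) 0).mulVec _ j
  rw [A2_mulVec]
  beta_reduce
  by_cases hj : j = r
  · subst hj
    rw [Function.update_self, if_pos rfl, W2_mulVec_zero, dot_sub, sel_dot]
    simp only [Matrix.cons_val_zero, Matrix.cons_val_one, Matrix.head_cons, zero_mul,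
      add_zero, neg_one_mul, mul_zero]
    have : z j - rl (z j - v ⬝ᵥ z + -c) = min (z j) (v ⬝ᵥ z + c) := by
      rcases le_total (z j) (v ⬝ᵥ z + c) with h | h
      · rw [min_eq_left h, show rl (z j - v ⬝ᵥ z + -c) = 0 from max_eq_right (by linarith)]
        ring
      · rw [min_eq_right h, show rl (z j - v ⬝ᵥ z + -c) = z j - v ⬝ᵥ z + -c from
          max_eq_left (by linarith)]
        ring
    linarith [this]
  · rw [Function.update_of_ne hj, if_neg hj, add_zero]

lemma stepMax_mem (r : Fin d0) (v : Fin d0 → ℝ) (c : ℝ) :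
    stepMax r v c ∈ ResBlocks rl d0 [2] := by
  refine ⟨A2 r 1 0, W2 (fun j => v j - esel r j) 0, ![c, 0], id, rfl, ?_⟩
  funext z
  funext j
  show Function.update z r (max (z r) (v ⬝ᵥ z + c)) j = z j + (A2 r 1 0).mulVec _ j
  rw [A2_mulVec]
  beta_reduce
  by_cases hj : j = r
  · subst hj
    rw [Function.update_self, if_pos rfl, W2_mulVec_zero, dot_sub, sel_dot]
    simp only [Matrix.cons_val_zero, Matrix.cons_val_one, Matrix.head_cons, zero_mul,
      add_zero, one_mul, mul_zero]
    have : z j + rl (v ⬝ᵥ z - z j + c) = max (z j) (v ⬝ᵥ z + c) := by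
      rcases le_total (z j) (v ⬝ᵥ z + c) with h | h
      · rw [max_eq_right h, show rl (v ⬝ᵥ z - z j + c) = v ⬝ᵥ z - z j + c from
          max_eq_left (by linarith)]
        ring
      · rw [max_eq_left h, show rl (v ⬝ᵥ z - z j + c) = 0 from max_eq_right (by linarith)]
        ring
    linarith [this]
  · rw [Function.update_of_ne hj, if_neg hj, add_zero]

/-- Sequential composition of a list of state maps, first element applied first. -/
def compL {α : Type*} : List (α → α) → (α → α)
  | [] => id
  | s :: t => compL t ∘ s

lemma compL_append {α : Type*} (l1 l2 : List (α → α)) (x : α) :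
    compL (l1 ++ l2) x = compL l2 (compL l1 x) := by
  induction l1 generalizing x with
  | nil => rfl
  | cons s t ih => simp [compL, ih]

lemma compL_mem (l : List ((Fin d0 → ℝ) → (Fin d0 → ℝ)))
    (h : ∀ s ∈ l, s ∈ ResBlocks rl d0 [2]) :
    compL l ∈ ResBlocks rl d0 (List.replicate l.length 2) := by
  induction l with
  | nil => exact rfl
  | cons s t ih =>
    obtain ⟨A, W, b, g, hg, hs⟩ := h s List.mem_cons_self
    have hg' : g = id := hg
    rw [List.length_cons, List.replicate_succ]
    refine ⟨A, W, b, compL t, ih fun s hs => h s (List.mem_cons_of_mem _ hs), ?_⟩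
    funext z
    show compL t (s z) = _
    rw [hs, hg']
    rfl

/-! ### State layout : `x` in the first `d` coordinates, two registers on top -/

def ι : Fin d → Fin (d + 2) := fun i => ⟨i.1, by omega⟩

def reg1 (d : ℕ) : Fin (d + 2) := ⟨d, by omega⟩

def reg2 (d : ℕ) : Fin (d + 2) := ⟨d + 1, by omega⟩

lemma ι_ne_reg1 (i : Fin d) : ι i ≠ reg1 d := by
  intro h
  have := congrArg Fin.val h
  simp only [ι, reg1] at this
  omega

lemma ι_ne_reg2 (i : Fin d) : ι i ≠ reg2 d := by
  intro h
  have := congrArg Fin.val h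
  simp only [ι, reg2] at this
  omega

lemma reg2_ne_reg1 : reg2 d ≠ reg1 d := by
  intro h
  have := congrArg Fin.val h
  simp only [reg1, reg2] at this
  omega

def vlift (w : Fin d → ℝ) : Fin (d + 2) → ℝ :=
  fun j => if h : (j : ℕ) < d then w ⟨j, h⟩ else 0

lemma vlift_dot (w : Fin d → ℝ) (z : Fin (d + 2) → ℝ) :
    vlift w ⬝ᵥ z = w ⬝ᵥ (fun i => z (ι i)) := by
  have hlast1 : vlift w (Fin.last (d + 1)) = 0 := by
    simp [vlift, Fin.last]
  have hlast2 : vlift w ((Fin.last d).castSucc) = 0 := by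
    simp [vlift, Fin.last, Fin.castSucc]
  have hcs : ∀ i : Fin d, (i.castSucc.castSucc : Fin (d + 2)) = ι i := fun i =>
    Fin.ext rfl
  show (∑ j : Fin (d + 2), vlift w j * z j) = _
  rw [Fin.sum_univ_castSucc, hlast1, zero_mul, add_zero, Fin.sum_univ_castSucc,
    hlast2, zero_mul, add_zero]
  refine Finset.sum_congr rfl fun i _ => ?_
  rw [hcs]
  congr 1
  simp only [vlift, ι]
  exact dif_pos i.2

/-! ### The straight-line program computing `maxList` -/

def minSteps (l : List (Aff d)) : List ((Fin (d + 2) → ℝ) → (Fin (d + 2) → ℝ)) :=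
  l.map fun a => stepMin (reg1 d) (vlift a.1) a.2

def grpSteps (g : Grp d) : List ((Fin (d + 2) → ℝ) → (Fin (d + 2) → ℝ)) :=
  stepAssign (reg1 d) (vlift g.1.1) g.1.2 :: minSteps g.2

def tailSteps (gs : List (Grp d)) : List ((Fin (d + 2) → ℝ) → (Fin (d + 2) → ℝ)) :=
  gs.flatMap fun g => grpSteps g ++ [stepMax (reg2 d) (esel (reg1 d)) 0]

def prog (first : Grp d) (rest : List (Grp d)) :
    List ((Fin (d + 2) → ℝ) → (Fin (d + 2) → ℝ)) :=
  (grpSteps first ++ [stepAssign (reg2 d) (esel (reg1 d)) 0]) ++ tailSteps rest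

lemma update_ι (z : Fin (d + 2) → ℝ) (t : ℝ) (r : Fin (d + 2)) (hr : ∀ i : Fin d, ι i ≠ r)
    (i : Fin d) : Function.update z r t (ι i) = z (ι i) :=
  Function.update_of_ne (hr i) _ _

lemma minSteps_sem (l : List (Aff d)) (z : Fin (d + 2) → ℝ) :
    compL (minSteps l) z = Function.update z (reg1 d)
      (l.foldl (fun m a => min m (evalA a (fun i => z (ι i)))) (z (reg1 d))) := by
  induction l generalizing z with
  | nil =>
    show z = _
    rw [List.foldl_nil, Function.update_eq_self]
  | cons a l ih =>
    show compL (minSteps l) (stepMin (reg1 d) (vlift a.1) a.2 z) = _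
    set z' := stepMin (reg1 d) (vlift a.1) a.2 z with hz'
    have hx : (fun i => z' (ι i)) = fun i => z (ι i) := by
      funext i
      exact update_ι z _ _ (fun i => ι_ne_reg1 i) i
    have hr : z' (reg1 d) = min (z (reg1 d)) (evalA a (fun i => z (ι i))) := by
      show Function.update z (reg1 d) _ (reg1 d) = _
      rw [Function.update_self, vlift_dot]
      rfl
    rw [ih z', hx, hr]
    show Function.update (Function.update z (reg1 d) _) (reg1 d) _ = _
    rw [Function.update_idem, List.foldl_cons]

lemma grpSteps_sem (g : Grp d) (z : Fin (d + 2) → ℝ) :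
    compL (grpSteps g) z = Function.update z (reg1 d) (minList g (fun i => z (ι i))) := by
  show compL (minSteps g.2) (stepAssign (reg1 d) (vlift g.1.1) g.1.2 z) = _
  set z' := stepAssign (reg1 d) (vlift g.1.1) g.1.2 z with hz'
  have hx : (fun i => z' (ι i)) = fun i => z (ι i) := by
    funext i
    exact update_ι z _ _ (fun i => ι_ne_reg1 i) i
  have hr : z' (reg1 d) = evalA g.1 (fun i => z (ι i)) := by
    show Function.update z (reg1 d) _ (reg1 d) = _
    rw [Function.update_self, vlift_dot]
    rfl
  rw [minSteps_sem, hx, hr]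
  show Function.update (Function.update z (reg1 d) _) (reg1 d) _ = _
  rw [Function.update_idem]
  rfl

lemma tailSteps_sem (gs : List (Grp d)) (z : Fin (d + 2) → ℝ) :
    (∀ i : Fin d, compL (tailSteps gs) z (ι i) = z (ι i)) ∧
    compL (tailSteps gs) z (reg2 d)
      = gs.foldl (fun M g => max M (minList g (fun i => z (ι i)))) (z (reg2 d)) := by
  induction gs generalizing z with
  | nil => exact ⟨fun i => rfl, rfl⟩
  | cons g gs ih =>
    have hsplit : tailSteps (g :: gs)
        = (grpSteps g ++ [stepMax (reg2 d) (esel (reg1 d)) 0]) ++ tailSteps gs := by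
      simp [tailSteps]
    have hmid : compL (grpSteps g ++ [stepMax (reg2 d) (esel (reg1 d)) 0]) z
        = Function.update (Function.update z (reg1 d) (minList g (fun i => z (ι i))))
            (reg2 d) (max (z (reg2 d)) (minList g (fun i => z (ι i)))) := by
      rw [compL_append, grpSteps_sem]
      show Function.update _ (reg2 d) _ = _
      set z1 := Function.update z (reg1 d) (minList g (fun i => z (ι i))) with hz1
      have h1 : z1 (reg2 d) = z (reg2 d) := Function.update_of_ne reg2_ne_reg1 _ _
      have h2 : esel (reg1 d) ⬝ᵥ z1 = minList g (fun i => z (ι i)) := by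
        rw [sel_dot]
        exact Function.update_self _ _ _
      rw [h1, h2, add_zero]
    set m := minList g (fun i => z (ι i)) with hm
    set z2 := Function.update (Function.update z (reg1 d) m) (reg2 d)
      (max (z (reg2 d)) m) with hz2
    have hx2 : ∀ i : Fin d, z2 (ι i) = z (ι i) := by
      intro i
      rw [hz2]
      rw [Function.update_of_ne (ι_ne_reg2 i), Function.update_of_ne (ι_ne_reg1 i)]
    have hr2 : z2 (reg2 d) = max (z (reg2 d)) m := Function.update_self _ _ _
    have hcomp : compL (tailSteps (g :: gs)) z = compL (tailSteps gs) z2 := by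
      rw [hsplit, compL_append, hmid]
    obtain ⟨ihx, ihr⟩ := ih z2
    constructor
    · intro i
      rw [hcomp, ihx i, hx2 i]
    · have e : (fun i => z2 (ι i)) = fun i => z (ι i) := funext hx2
      rw [hcomp, ihr]
      simp only [e]
      rw [hr2, List.foldl_cons]

lemma prog_sem (first : Grp d) (rest : List (Grp d)) (z : Fin (d + 2) → ℝ) :
    compL (prog first rest) z (reg2 d) = maxList first rest (fun i => z (ι i)) := by
  rw [prog, compL_append, compL_append, grpSteps_sem]
  set m0 := minList first (fun i => z (ι i)) with hm0
  set z1 := Function.update z (reg1 d) m0 with hz1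
  have hstep : compL [stepAssign (reg2 d) (esel (reg1 d)) 0] z1
      = Function.update z1 (reg2 d) m0 := by
    show Function.update z1 (reg2 d) (esel (reg1 d) ⬝ᵥ z1 + 0) = _
    rw [sel_dot, add_zero, hz1, Function.update_self]
  rw [hstep]
  set z2 := Function.update z1 (reg2 d) m0 with hz2
  have hx2 : (fun i => z2 (ι i)) = fun i => z (ι i) := by
    funext i
    rw [hz2, Function.update_of_ne (ι_ne_reg2 i), hz1, Function.update_of_ne (ι_ne_reg1 i)]
  obtain ⟨_, hr⟩ := tailSteps_sem rest z2
  rw [hr, hx2]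
  have : z2 (reg2 d) = m0 := Function.update_self _ _ _
  rw [this]
  rfl

def A0mat (d : ℕ) : Matrix (Fin (d + 2)) (Fin d) ℝ :=
  fun j i => if j = ι i then 1 else 0

lemma ι_inj : Function.Injective (ι (d := d)) := fun a b h => by
  simpa [ι, Fin.ext_iff] using h

lemma A0_apply_ι (x : Fin d → ℝ) (i : Fin d) :
    ((A0mat d).mulVec x + 0) (ι i) = x i := by
  simp only [Pi.add_apply, Pi.zero_apply, add_zero, mulVec, dotProduct, A0mat]
  have hterm : ∀ k : Fin d, (if ι i = ι k then (1:ℝ) else 0) * x k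
      = if k = i then x k else 0 := by
    intro k
    by_cases h : k = i
    · subst h; rw [if_pos rfl, if_pos rfl, one_mul]
    · rw [if_neg (fun h' => h (ι_inj h').symm), if_neg h, zero_mul]
  rw [Finset.sum_congr rfl fun k _ => hterm k, Finset.sum_ite_eq' Finset.univ i]
  simp

lemma prog_steps_mem (first : Grp d) (rest : List (Grp d)) :
    ∀ s ∈ prog first rest, s ∈ ResBlocks rl (d + 2) [2] := by
  have hgrp : ∀ (g : Grp d), ∀ s ∈ grpSteps g, s ∈ ResBlocks rl (d + 2) [2] := by
    intro g s hs
    rcases List.mem_cons.mp hs with h | h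
    · subst h; exact stepAssign_mem _ _ _
    · obtain ⟨a, _, rfl⟩ := List.mem_map.mp h
      exact stepMin_mem _ _ _
  intro s hs
  rcases List.mem_append.mp hs with h | h
  · rcases List.mem_append.mp h with h | h
    · exact hgrp first s h
    · rcases List.mem_singleton.mp h with rfl
      exact stepAssign_mem _ _ _
  · obtain ⟨g, _, hg⟩ := List.mem_flatMap.mp h
    rcases List.mem_append.mp hg with h' | h'
    · exact hgrp g s h'
    · rcases List.mem_singleton.mp h' with rfl
      exact stepMax_mem _ _ _

theorem rep_in_resNet (first : Grp d) (rest : List (Grp d)) :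
    ∃ L : ℕ, maxList first rest ∈ ResNet rl d (d + 2) (List.replicate (L - 1) 2) := by
  refine ⟨(prog first rest).length + 1, A0mat d, 0, esel (reg2 d),
    compL (prog first rest), ?_, ?_⟩
  · rw [Nat.add_sub_cancel]
    exact compL_mem _ (prog_steps_mem first rest)
  · funext x
    rw [show (∑ i, esel (reg2 d) i * compL (prog first rest) ((A0mat d).mulVec x + 0) i)
        = esel (reg2 d) ⬝ᵥ compL (prog first rest) ((A0mat d).mulVec x + 0) from rfl]
    rw [sel_dot, prog_sem]
    congr 1
    funext i
    exact (A0_apply_ι x i).symm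

end ResNetUA

namespace ResNetUA

/-! ### Separation lemma -/

lemma rep_separates {d : ℕ} (x y : Fin d → ℝ) (hxy : x ≠ y) (vx vy : ℝ) :
    ∃ φ : (Fin d → ℝ) → ℝ, Rep φ ∧ φ x = vx ∧ φ y = vy := by
  have : ∃ k, x k ≠ y k := by
    by_contra h
    push_neg at h
    exact hxy (funext h)
  obtain ⟨k, hk⟩ := this
  set s : ℝ := (vx - vy) / (x k - y k) with hs
  set w : Fin d → ℝ := fun i => if i = k then s else 0 with hw
  have hdot : ∀ p : Fin d → ℝ, w ⬝ᵥ p = s * p k := by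
    intro p
    simp [hw, dotProduct, ite_mul, Finset.sum_ite_eq']
  refine ⟨fun p => w ⬝ᵥ p + (vx - s * x k), rep_affine _ _, ?_, ?_⟩
  · show w ⬝ᵥ x + (vx - s * x k) = vx
    rw [hdot]; ring
  · show w ⬝ᵥ y + (vx - s * x k) = vy
    rw [hdot]
    have hne : x k - y k ≠ 0 := sub_ne_zero.mpr hk
    have : s * y k = s * x k - (vx - vy) := by
      rw [hs]
      field_simp
      ring
    rw [this]; ring

end ResNetUA

/-- Universal approximation by deep residual ReLU networks of internal width `d + 2` with all
residual blocks of width `2`: every continuous function on a compact `K ⊆ ℝ^d` can be uniformly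
approximated to accuracy `ε` by some `g ∈ R_{L,ReLU}(d+2, 2, …, 2)` for some depth `L`. -/
theorem relu_resNet_universal_approximation (d : ℕ) (hd : 1 ≤ d)
    (K : Set (Fin d → ℝ)) (hK : IsCompact K)
    (f : (Fin d → ℝ) → ℝ) (hf : ContinuousOn f K) (ε : ℝ) (hε : 0 < ε) :
    ∃ (L : ℕ) (g : (Fin d → ℝ) → ℝ),
      g ∈ ResNet (fun x => max x 0) d (d + 2) (List.replicate (L - 1) 2) ∧
      ∀ x ∈ K, |f x - g x| ≤ ε := by
  classical
  open ResNetUA in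
  haveI : CompactSpace K := isCompact_iff_compactSpace.mp hK
  set S : Set C(K, ℝ) :=
    {fc | ∃ φ : (Fin d → ℝ) → ℝ, ResNetUA.Rep φ ∧ ∀ x : K, fc x = φ (x : Fin d → ℝ)} with hS
  have hne : S.Nonempty := by
    refine ⟨ContinuousMap.const _ 0, fun _ => 0, ResNetUA.rep_const 0, fun x => rfl⟩
  have hinf : ∀ fc ∈ S, ∀ gc ∈ S, fc ⊓ gc ∈ S := by
    rintro fc ⟨φ, hφ, hfc⟩ gc ⟨ψ, hψ, hgc⟩
    exact ⟨fun p => min (φ p) (ψ p), ResNetUA.rep_inf hφ hψ,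
      fun x => by simp [ContinuousMap.inf_apply, hfc x, hgc x]⟩
  have hsup : ∀ fc ∈ S, ∀ gc ∈ S, fc ⊔ gc ∈ S := by
    rintro fc ⟨φ, hφ, hfc⟩ gc ⟨ψ, hψ, hgc⟩
    exact ⟨fun p => max (φ p) (ψ p), ResNetUA.rep_sup hφ hψ,
      fun x => by simp [ContinuousMap.sup_apply, hfc x, hgc x]⟩
  have hsep : S.SeparatesPointsStrongly := by
    intro v x y
    by_cases hxy : (x : Fin d → ℝ) = (y : Fin d → ℝ)
    · have hxy' : x = y := Subtype.ext hxy
      subst hxy'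
      exact ⟨ContinuousMap.const _ (v x),
        ⟨fun _ => v x, ResNetUA.rep_const _, fun _ => rfl⟩, rfl, rfl⟩
    · obtain ⟨φ, hφ, hx, hy⟩ := ResNetUA.rep_separates (x : Fin d → ℝ) (y : Fin d → ℝ)
        hxy (v x) (v y)
      exact ⟨⟨fun p : K => φ (p : Fin d → ℝ),
          (ResNetUA.rep_continuous hφ).comp continuous_subtype_val⟩,
        ⟨φ, hφ, fun _ => rfl⟩, hx, hy⟩
  have hclos := ContinuousMap.sublattice_closure_eq_top S hne hinf hsup hsep
  set F : C(K, ℝ) := ⟨K.restrict f, hf.restrict⟩ with hF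
  have hFmem : F ∈ closure S := by rw [hclos]; trivial
  obtain ⟨gc, hgcS, hdist⟩ := Metric.mem_closure_iff.mp hFmem ε hε
  obtain ⟨φ, hφ, hgc⟩ := hgcS
  obtain ⟨first, rest, rfl⟩ := hφ
  obtain ⟨L, hmem⟩ := ResNetUA.rep_in_resNet first rest
  refine ⟨L, ResNetUA.maxList first rest, hmem, fun x hx => ?_⟩
  have h1 : |f x - ResNetUA.maxList first rest x|
      = dist (F ⟨x, hx⟩) (gc ⟨x, hx⟩) := by
    rw [Real.dist_eq, hgc ⟨x, hx⟩]
    rfl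
  rw [h1]
  exact le_of_lt (lt_of_le_of_lt (ContinuousMap.dist_apply_le_dist _) hdist)
end
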